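/- Let R be a commutative ring, S a multiplicatively closed subset, and I an S-n-ideal of R. Then the localized ideal S⁻¹I is an n-ideal of the localization S⁻¹R. -/

import Mathlib

/-- `I` is an `S`-`n`-ideal: `I` is disjoint from `S` and there is `s ∈ S` such that
whenever `a * b ∈ I` and `s * a` is not nilpotent, then `s * b ∈ I`. -/
def IsSnIdeal {R : Type*} [CommRing R] (S : Set R) (I : Ideal R) : Prop :=
  Disjoint S (I : Set R) ∧
    ∃ s ∈ S, ∀ a b : R, a * b ∈ I → s * a ∉ nilradical R → s * b ∈ I

/-- `I` is an `n`-ideal: `I` is proper and `a * b ∈ I` with `a` not nilpotent implies `b ∈ I`. -/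
def IsNIdeal {R : Type*} [CommRing R] (I : Ideal R) : Prop :=
  I ≠ ⊤ ∧ ∀ a b : R, a * b ∈ I → a ∉ nilradical R → b ∈ I

/-- `I` is an `S`-prime ideal. -/
def IsSPrime {R : Type*} [CommRing R] (S : Set R) (I : Ideal R) : Prop :=
  Disjoint S (I : Set R) ∧
    ∃ s ∈ S, ∀ a b : R, a * b ∈ I → s * a ∈ I ∨ s * b ∈ I
theorem stmt_16 {R : Type*} [CommRing R] (S : Submonoid R) (I : Ideal R)
    (hI : IsSnIdeal (S : Set R) I) :
    IsNIdeal (I.map (algebraMap R (Localization S))) := by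
  obtain ⟨hdisj, s, hs, hsn⟩ := hI
  constructor
  · intro htop
    have h1 : (1 : Localization S) ∈ I.map (algebraMap R (Localization S)) := by
      rw [htop]; trivial
    rw [show (1 : Localization S) = IsLocalization.mk' (Localization S) (1 : R) (1 : S) by
          simp [IsLocalization.mk'_one],
        IsLocalization.mk'_mem_map_algebraMap_iff S] at h1
    obtain ⟨w, hw, hwI⟩ := h1
    rw [mul_one] at hwI
    exact Set.disjoint_left.1 hdisj hw hwI
  · intro x y hxy hx
    obtain ⟨⟨a, t⟩, hat⟩ := IsLocalization.mk'_surjective S x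
    obtain rfl : IsLocalization.mk' (Localization S) a t = x := hat
    obtain ⟨⟨b, u⟩, hbu⟩ := IsLocalization.mk'_surjective S y
    obtain rfl : IsLocalization.mk' (Localization S) b u = y := hbu
    rw [← IsLocalization.mk'_mul, IsLocalization.mk'_mem_map_algebraMap_iff S] at hxy
    obtain ⟨w, hw, hwI⟩ := hxy
    -- `s * a` is not nilpotent in `R`
    have hsa : s * a ∉ nilradical R := by
      intro hsa
      apply hx
      obtain ⟨n, hn⟩ := hsa
      have hu : IsUnit ((algebraMap R (Localization S)) (s * (t : R))) :=
        IsLocalization.map_units (Localization S) (⟨s, hs⟩ * t)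
      have key : ((algebraMap R (Localization S)) (s * (t : R)) *
          IsLocalization.mk' (Localization S) a t) ^ n = 0 := by
        rw [map_mul, mul_assoc, IsLocalization.mk'_spec', ← map_mul, ← map_pow, hn, map_zero]
      rw [mul_pow] at key
      refine ⟨n, ?_⟩
      exact ((hu.pow n).mul_right_eq_zero).1 key
    -- apply the S-n-ideal property to `a * (w * b) ∈ I`
    have hab : a * (w * b) ∈ I := by
      have : a * (w * b) = w * (a * b) := by ring
      rw [this]; exact hwI
    have hswb : s * (w * b) ∈ I := hsn a (w * b) hab hsa
    rw [IsLocalization.mk'_mem_map_algebraMap_iff S]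
    exact ⟨s * w, S.mul_mem hs hw, by rwa [show s * w * b = s * (w * b) by ring]⟩
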